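/- Full continuum limit of the Kac–van Moerbeke-type equation: substituting u_{N±1} = u ± ε u_x + (ε²/2)u_{xx} ± (ε³/6)u_{xxx} + O(ε⁴) with ε = 1/p₁ into u_{N,τ} = 2(u_{N+1}−u_{N−1})/(u_{N+1}−u_{N−1}−4p₁) and using ∂_τ = −ε²∂_x − (ε⁴/6)∂_t, the leading nontrivial order in ε yields u_t = u_{xxx} + 3u_x², the potential KdV equation. -/

import Mathlib

open Polynomial

/-- Full continuum limit of the Kac–van Moerbeke-type equation
`u_{N,τ} = 2(u_{N+1}−u_{N−1})/(u_{N+1}−u_{N−1}−4p₁)`: substituting the formal Taylor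
expansions `u_{N±1} = u ± ε u_x + (ε²/2)u_{xx} ± (ε³/6)u_{xxx} + O(ε⁴)` with `ε = 1/p₁`
and `∂_τ = −ε²∂_x − (ε⁴/6)∂_t`, after clearing the denominator (multiplying the
equation by `ε`), all coefficients up to and including order `ε⁴` vanish iff the
potential KdV equation `u_t = u_{xxx} + 3u_x²` holds. -/
theorem kvm_full_continuum_limit_potential_kdv
    {R : Type*} [CommRing R] [Algebra ℚ R]
    (u ux uxx uxxx ut : R) :
    -- u_{N±1}, truncated at order ε³
    (∀ uN1 uN1m uτ : Polynomial R,
      uN1 = C u + C ux * X + ((1:ℚ)/2) • (C uxx * X^2) + ((1:ℚ)/6) • (C uxxx * X^3) →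
      uN1m = C u - C ux * X + ((1:ℚ)/2) • (C uxx * X^2) - ((1:ℚ)/6) • (C uxxx * X^3) →
      -- u_{N,τ} via ∂_τ = −ε²∂_x − (ε⁴/6)∂_t
      uτ = -(C ux * X^2) - ((1:ℚ)/6) • (C ut * X^4) →
      -- the equation multiplied by ε, i.e. u_{N,τ}(ε(u_{N+1}−u_{N−1}) − 4) = 2ε(u_{N+1}−u_{N−1})
      ((∀ k : ℕ, k ≤ 4 →
          (uτ * (X * (uN1 - uN1m) - 4) - 2 • (X * (uN1 - uN1m))).coeff k = 0)
        ↔ ut = uxxx + 3 * ux^2)) := by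
  intro uN1 uN1m uτ h1 h2 h3
  subst h1 h2 h3
  have key : ((-(C ux * X^2) - ((1:ℚ)/6) • (C ut * X^4)) *
        (X * ((C u + C ux * X + ((1:ℚ)/2) • (C uxx * X^2) + ((1:ℚ)/6) • (C uxxx * X^3)) -
          (C u - C ux * X + ((1:ℚ)/2) • (C uxx * X^2) - ((1:ℚ)/6) • (C uxxx * X^3))) - 4) -
        2 • (X * ((C u + C ux * X + ((1:ℚ)/2) • (C uxx * X^2) + ((1:ℚ)/6) • (C uxxx * X^3)) -
          (C u - C ux * X + ((1:ℚ)/2) • (C uxx * X^2) - ((1:ℚ)/6) • (C uxxx * X^3)))))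
      = ((2:ℚ)/3) • (C (ut - uxxx - 3 * ux^2) * X^4)
        - ((1:ℚ)/3) • (C (ux * uxxx + ut * ux) * X^6)
        - ((1:ℚ)/18) • (C (ut * uxxx) * X^8) := by
    have hsmul : ∀ (q : ℚ) (p : Polynomial R), q • p = C (q • (1:R)) * p := fun q p => by
      rw [Algebra.smul_def, Polynomial.algebraMap_apply, Algebra.smul_def, mul_one]
    have hnq : ∀ (n : ℕ) (q : ℚ) (x : R), ((n:ℚ) * q) • x = (n:R) * (q • x) := fun n q x => by
      rw [mul_smul, Nat.cast_smul_eq_nsmul, nsmul_eq_mul]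
    set e : R := ((1:ℚ)/6) • (1:R) with he
    have h23 : ((2:ℚ)/3) • (1:R) = 4 * e := by
      rw [he, show ((2:ℚ)/3) = ((4:ℕ):ℚ) * ((1:ℚ)/6) by norm_num, hnq]; norm_num
    have h13 : ((1:ℚ)/3) • (1:R) = 2 * e := by
      rw [he, show ((1:ℚ)/3) = ((2:ℕ):ℚ) * ((1:ℚ)/6) by norm_num, hnq]; norm_num
    have h118 : ((1:ℚ)/18) • (1:R) = 2 * (e * e) := by
      rw [he, smul_mul_smul_comm, mul_one,
        show ((1:ℚ)/6 * ((1:ℚ)/6)) = ((1:ℚ)/36) by norm_num,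
        show ((1:ℚ)/18) = ((2:ℕ):ℚ) * ((1:ℚ)/36) by norm_num, hnq]; norm_num
    have h6 : (6:R) * e = 1 := by
      rw [he, show ((6:R)) = ((6:ℕ):R) by norm_num, ← nsmul_eq_mul,
        ← Nat.cast_smul_eq_nsmul ℚ, smul_smul]
      norm_num
    have h6C : (6 : Polynomial R) * C e = 1 := by
      have := congrArg (C : R →+* Polynomial R) h6
      rw [map_mul, map_one, map_ofNat] at this
      exact this
    simp only [hsmul, h23, h13, h118]
    simp only [map_mul, map_add, map_sub, map_ofNat, map_pow]
    linear_combination (2 * C ux^2 * X^4) * h6C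
  rw [key]
  constructor
  · intro h
    have h4 := h 4 (le_refl 4)
    simp only [coeff_sub, coeff_smul, coeff_C_mul, coeff_X_pow] at h4
    norm_num at h4
    linear_combination h4
  · intro h k hk
    have hz : ut - uxxx - 3 * ux^2 = 0 := by rw [h]; ring
    simp only [coeff_sub, coeff_smul, coeff_C_mul, coeff_X_pow, hz]
    interval_cases k <;> norm_num
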